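/- Let F : ℂ → ℂ be analytic at a point z₀ with F(z₀) = z₀, and suppose F is involutive near z₀, i.e. F(F(z)) = z for all z in some neighborhood of z₀. Then the derivative F′(z₀) equals 1 or −1; moreover, if F′(z₀) = 1, then F(z) = z for all z in a neighborhood of z₀. -/
import Mathlib

/-- An involutive holomorphic map fixing a point has derivative ±1 there,
and derivative +1 forces it to be the identity germ. -/
theorem stmt0 (F : ℂ → ℂ) (z₀ : ℂ) (hF : AnalyticAt ℂ F z₀) (hfix : F z₀ = z₀)
    (hinv : ∀ᶠ z in nhds z₀, F (F z) = z) :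
    (deriv F z₀ = 1 ∨ deriv F z₀ = -1) ∧
      (deriv F z₀ = 1 → ∀ᶠ z in nhds z₀, F z = z) := by
  obtain ⟨p, hp⟩ := hF
  have hd : HasDerivAt F (deriv F z₀) z₀ := hp.hasDerivAt.congr_deriv hp.hasDerivAt.deriv.symm
  -- chain rule: deriv of F ∘ F at z₀ is (deriv F z₀)^2, but F ∘ F = id near z₀
  have hd' : HasDerivAt F (deriv F z₀) (F z₀) := by rwa [hfix]
  have hcomp : HasDerivAt (fun z => F (F z)) (deriv F z₀ * deriv F z₀) z₀ :=
    hd'.comp z₀ hd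
  have hid : HasDerivAt (fun z => F (F z)) 1 z₀ := by
    have : HasDerivAt (fun z : ℂ => z) 1 z₀ := hasDerivAt_id z₀
    exact this.congr_of_eventuallyEq (by filter_upwards [hinv] with z hz using hz)
  have hsq : deriv F z₀ * deriv F z₀ = 1 := by
    exact hcomp.unique hid
  have hpm : deriv F z₀ = 1 ∨ deriv F z₀ = -1 := mul_self_eq_one_iff.mp hsq
  refine ⟨hpm, fun h1 => ?_⟩
  -- H z = z + F z has strict derivative 2 ≠ 0 at z₀
  set H : ℂ → ℂ := fun z => z + F z with hHdef
  have hH : HasStrictDerivAt H 2 z₀ := by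
    have := (hasStrictDerivAt_id z₀).add hp.hasStrictDerivAt
    rw [hp.hasDerivAt.deriv] at *
    rwa [h1, (by norm_num : (1 : ℂ) + 1 = 2)] at this
  have h2 : (2 : ℂ) ≠ 0 := by norm_num
  set G := hH.localInverse H 2 z₀ h2 with hGdef
  have hleft : ∀ᶠ z in nhds z₀, G (H z) = z :=
    (hH.hasStrictFDerivAt_equiv h2).eventually_left_inverse
  -- F z tends to z₀, so G (H (F z)) = F z eventually
  have hcont : Filter.Tendsto F (nhds z₀) (nhds z₀) := by
    have := hp.continuousAt; rwa [ContinuousAt, hfix] at this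
  have hleftF : ∀ᶠ z in nhds z₀, G (H (F z)) = F z := hcont.eventually hleft
  filter_upwards [hinv, hleft, hleftF] with z hz h1z h2z
  have hHF : H (F z) = H z := by simp only [hHdef, hz]; ring
  have := h2z
  rw [hHF, h1z] at this
  exact this.symm
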